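/- As t → ∞, σmin(t)/t tends to (k/2)·(√((α − β)² + 4γ) − (α + β)), where α = B/ustar, β = (Σ_{ℓ=1}^{G} kℓ·B'ℓ)/(k·ρcv), and γ = (B'/ustar)·(Σ_{ℓ=1}^{G} kℓ·Bℓ)/(k·ρcv). -/

import Mathlib

open Filter

/-- Large-timestep asymptotics of the Ψtc parameter from Lemma 1 of the paper:
`σmin(t)/t → (k/2)·(√((α−β)² + 4γ) − (α+β))` as `t → ∞`. -/
theorem stmt_3
    (G : ℕ) (hG : 1 ≤ G)
    (ustar ρcv k B B' u0 T0 Tstar : ℝ)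
    (hustar : 0 < ustar) (hρcv : 0 < ρcv) (hk : 0 < k)
    (hB : 0 < B) (hB' : 0 < B') (hu0 : 0 ≤ u0)
    (kk Bk B'k : Fin G → ℝ)
    (hkk : ∀ ℓ, 0 < kk ℓ) (hBk : ∀ ℓ, 0 < Bk ℓ) (hB'k : ∀ ℓ, 0 < B'k ℓ)
    (a C C' b c σmin : ℝ → ℝ)
    (ha : ∀ t : ℝ, a t = k * t)
    (hC : ∀ t : ℝ, C t = t * (∑ ℓ, kk ℓ * Bk ℓ) / ρcv)
    (hC' : ∀ t : ℝ, C' t = t * (∑ ℓ, kk ℓ * B'k ℓ) / ρcv)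
    (hb : ∀ t : ℝ, 2 * b t = u0 - ustar + a t * B + C' t * ustar)
    (hc : ∀ t : ℝ, c t = C' t * (u0 - ustar + a t * B)
                          + a t * B' * (T0 - Tstar - C t))
    (hσmin : ∀ t : ℝ, σmin t = (Real.sqrt (b t ^ 2 - ustar * c t) - b t) / ustar)
    (α β γ : ℝ)
    (hα : α = B / ustar)
    (hβ : β = (∑ ℓ, kk ℓ * B'k ℓ) / (k * ρcv))
    (hγ : γ = (B' / ustar) * (∑ ℓ, kk ℓ * Bk ℓ) / (k * ρcv)) :
    Tendsto (fun t => σmin t / t) atTop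
      (nhds ((k / 2) * (Real.sqrt ((α - β) ^ 2 + 4 * γ) - (α + β)))) := by
  have hust : ustar ≠ 0 := hustar.ne'
  have hkne : k ≠ 0 := hk.ne'
  have hρ : ρcv ≠ 0 := hρcv.ne'
  obtain ⟨S, hSdef⟩ : ∃ x : ℝ, x = ∑ ℓ, kk ℓ * Bk ℓ := ⟨_, rfl⟩
  obtain ⟨S', hS'def⟩ : ∃ x : ℝ, x = ∑ ℓ, kk ℓ * B'k ℓ := ⟨_, rfl⟩
  rw [← hSdef] at hC hγ
  rw [← hS'def] at hC' hβ
  obtain ⟨binf, hbinfdef⟩ : ∃ x : ℝ, x = (k * B + S' / ρcv * ustar) / 2 := ⟨_, rfl⟩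
  obtain ⟨cinf, hcinfdef⟩ : ∃ x : ℝ, x = k * (S' * B - B' * S) / ρcv := ⟨_, rfl⟩
  -- limit of b t / t
  have h1 : Tendsto (fun t : ℝ => b t / t) atTop (nhds binf) := by
    have heq : ∀ᶠ t in atTop, (u0 - ustar) / 2 * t⁻¹ + binf = b t / t := by
      filter_upwards [eventually_gt_atTop (0 : ℝ)] with t ht
      have h2b := hb t
      rw [ha, hC'] at h2b
      have hbt : b t = (u0 - ustar + k * t * B + t * S' / ρcv * ustar) / 2 := by
        linarith
      rw [hbt, hbinfdef]
      field_simp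
      ring
    refine Tendsto.congr' heq ?_
    have := (tendsto_inv_atTop_zero (𝕜 := ℝ)).const_mul ((u0 - ustar) / 2)
    have := this.add (tendsto_const_nhds (x := binf) (f := atTop))
    simpa using this
  -- limit of c t / t^2
  have h2 : Tendsto (fun t : ℝ => c t / t ^ 2) atTop (nhds cinf) := by
    have heq : ∀ᶠ t in atTop,
        (S' / ρcv * (u0 - ustar) + k * B' * (T0 - Tstar)) * t⁻¹ + cinf = c t / t ^ 2 := by
      filter_upwards [eventually_gt_atTop (0 : ℝ)] with t ht
      have hct := hc t
      rw [ha, hC, hC'] at hct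
      rw [hct, hcinfdef]
      field_simp
      ring
    refine Tendsto.congr' heq ?_
    have := (tendsto_inv_atTop_zero (𝕜 := ℝ)).const_mul
      (S' / ρcv * (u0 - ustar) + k * B' * (T0 - Tstar))
    have := this.add (tendsto_const_nhds (x := cinf) (f := atTop))
    simpa using this
  -- combined limit
  have h3 : Tendsto
      (fun t : ℝ => (Real.sqrt ((b t / t) ^ 2 - ustar * (c t / t ^ 2)) - b t / t) / ustar)
      atTop (nhds ((Real.sqrt (binf ^ 2 - ustar * cinf) - binf) / ustar)) := by
    exact ((((h1.pow 2).sub (h2.const_mul ustar)).sqrt).sub h1).div_const ustar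
  -- eventual equality with σmin t / t
  have heq : ∀ᶠ t in atTop,
      (Real.sqrt ((b t / t) ^ 2 - ustar * (c t / t ^ 2)) - b t / t) / ustar
        = σmin t / t := by
    filter_upwards [eventually_gt_atTop (0 : ℝ)] with t ht
    have htne : t ≠ 0 := ht.ne'
    have hX : (b t / t) ^ 2 - ustar * (c t / t ^ 2)
        = (b t ^ 2 - ustar * c t) * (t⁻¹) ^ 2 := by
      field_simp
    have hsq : Real.sqrt ((b t ^ 2 - ustar * c t) * (t⁻¹) ^ 2)
        = Real.sqrt (b t ^ 2 - ustar * c t) * t⁻¹ := by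
      rw [Real.sqrt_mul' _ (sq_nonneg _), Real.sqrt_sq (inv_nonneg.mpr ht.le)]
    rw [hX, hsq, hσmin, div_eq_mul_inv (b t) t, ← sub_mul, mul_div_right_comm]
    exact (div_eq_mul_inv _ _).symm
  have hfin := h3.congr' heq
  -- identify the limit value
  have hDnn : (0:ℝ) ≤ (k * ustar / 2) ^ 2 := sq_nonneg _
  have key : binf ^ 2 - ustar * cinf = (k * ustar / 2) ^ 2 * ((α - β) ^ 2 + 4 * γ) := by
    rw [hα, hβ, hγ, hbinfdef, hcinfdef]
    field_simp
    ring
  have hbval : binf = ustar * (k / 2) * (α + β) := by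
    rw [hα, hβ, hbinfdef]
    field_simp
  have hval : (Real.sqrt (binf ^ 2 - ustar * cinf) - binf) / ustar
      = (k / 2) * (Real.sqrt ((α - β) ^ 2 + 4 * γ) - (α + β)) := by
    rw [key, Real.sqrt_mul hDnn,
      Real.sqrt_sq (by positivity : (0:ℝ) ≤ k * ustar / 2), hbval]
    field_simp
  rwa [hval] at hfin
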